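/- Suppose S = ∅ and there exists J ⊆ [n]∖[h] with M_J invertible such that, with A^J_{i,j} := -|(M_J^{-1})_{i,j} ū_j| for i,j ∈ J and C^J_{i,j} := -|M_{i,·}(M_J^{-1})_{·,j} ū_j| for i ∈ N, j ∈ J: (i) Σ_{j∈J} A^J_{J,j} - M_J^{-1} q̄_J ≥ 0 and (ii) Σ_{j∈J} C^J_{N,j} - ū_N - M_{N,J} M_J^{-1} q̄_J + q̄_N ≥ 0. Then there exists an AAR solution of the uncertain LCP. -/

import Mathlib

open Matrix BigOperators
open scoped Classical

noncomputable section

/-- `u` lies in the box `[-ū, ū]`. -/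
def inBox {n : ℕ} (ubar u : Fin n → ℝ) : Prop :=
  ∀ i, -ubar i ≤ u i ∧ u i ≤ ubar i

/-- `z` solves the LCP with matrix `M` and vector `q`. -/
def IsLCPSol {n : ℕ} (M : Matrix (Fin n) (Fin n) ℝ) (q z : Fin n → ℝ) : Prop :=
  (∀ i, 0 ≤ z i) ∧ (∀ i, 0 ≤ (M.mulVec z + q) i) ∧
    ∑ i, z i * (M.mulVec z + q) i = 0

/-- `z(u) = D u + r` is an affinely adjustable robust solution of the
uncertain LCP with vector `q(u) = q̄ + u`. -/
def IsAAR {n : ℕ} (M : Matrix (Fin n) (Fin n) ℝ) (qbar ubar : Fin n → ℝ)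
    (D : Matrix (Fin n) (Fin n) ℝ) (r : Fin n → ℝ) : Prop :=
  ∀ u, inBox ubar u → IsLCPSol M (qbar + u) (D.mulVec u + r)

/-- The principal submatrix of `M` indexed by the finset `J`. -/
def subM {n : ℕ} (M : Matrix (Fin n) (Fin n) ℝ) (J : Finset (Fin n)) :
    Matrix J J ℝ :=
  Matrix.of fun i j => M i.1 j.1

/-- The subvector of `q` indexed by `J`. -/
def subV {n : ℕ} (q : Fin n → ℝ) (J : Finset (Fin n)) : J → ℝ :=
  fun i => q i.1

/-- Auxiliary bound: a dot product is bounded by the sum of absolute values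
scaled by the box bounds. -/
lemma aux_sum_abs_bound {α : Type*} [Fintype α] (a u ub : α → ℝ)
    (hu : ∀ j, |u j| ≤ ub j) :
    ∑ j, a j * u j ≤ ∑ j, |a j * ub j| := by
  apply Finset.sum_le_sum
  intro j _
  calc a j * u j ≤ |a j * u j| := le_abs_self _
    _ = |a j| * |u j| := abs_mul _ _
    _ ≤ |a j| * ub j := mul_le_mul_of_nonneg_left (hu j) (abs_nonneg _)
    _ = |a j * ub j| := by
        rw [abs_mul, abs_of_nonneg ((abs_nonneg (u j)).trans (hu j))]

/-- Sum over the whole type equals sum over a finset when the function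
vanishes outside. -/
lemma aux_sum_eq_subtype {n : ℕ} (J : Finset (Fin n)) (f : Fin n → ℝ)
    (hf : ∀ j ∉ J, f j = 0) : ∑ j, f j = ∑ j : J, f j.1 := by
  rw [Finset.sum_coe_sort]
  exact (Finset.sum_subset J.subset_univ (fun x _ hx => hf x hx)).symm

/-- sufficient condition for the existence of an AAR solution
in the case `S = ∅`. -/
theorem stmt_8 (n h : ℕ) (M : Matrix (Fin n) (Fin n) ℝ) (qbar ubar : Fin n → ℝ)
    (hubar : ∀ i, 0 < ubar i)
    (J : Finset (Fin n)) (hJh : ∀ i ∈ J, h ≤ (i : ℕ))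
    (hinv : IsUnit (subM M J).det)
    (hA : ∀ i : J,
      0 ≤ (∑ j : J, -|((subM M J)⁻¹ i j) * ubar j.1|)
          - ((subM M J)⁻¹.mulVec (subV qbar J)) i)
    (hC : ∀ i : Fin n, i ∉ J →
      0 ≤ (∑ j : J, -|(∑ l : J, M i l.1 * ((subM M J)⁻¹ l j)) * ubar j.1|)
          - ubar i
          - (∑ j : J, M i j.1 * ((subM M J)⁻¹.mulVec (subV qbar J)) j)
          + qbar i) :
    ∃ (D : Matrix (Fin n) (Fin n) ℝ) (r : Fin n → ℝ),
      (∀ i : Fin n, (i : ℕ) < h → ∀ j, D i j = 0) ∧ IsAAR M qbar ubar D r := by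
  set B := (subM M J)⁻¹ with hBdef
  -- the affine solution: z_J(u) = -M_J⁻¹ (q̄_J + u_J), z_N = 0
  set D : Matrix (Fin n) (Fin n) ℝ :=
    fun i j => if hij : i ∈ J ∧ j ∈ J then -(B ⟨i, hij.1⟩ ⟨j, hij.2⟩) else 0
    with hDdef
  set r : Fin n → ℝ :=
    fun i => if hi : i ∈ J then -(B.mulVec (subV qbar J)) ⟨i, hi⟩ else 0
    with hrdef
  refine ⟨D, r, ?_, ?_⟩
  · intro i hih j
    have hiJ : i ∉ J := fun hiJ => absurd (hJh i hiJ) (by omega)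
    simp [hDdef, hiJ]
  intro u hu
  set z : Fin n → ℝ := D.mulVec u + r with hzdef
  -- z vanishes outside J
  have hz_out : ∀ i ∉ J, z i = 0 := by
    intro i hi
    simp [hzdef, Matrix.mulVec, dotProduct, hDdef, hrdef, hi]
  -- the value of z on J
  have hz_in : ∀ (i : Fin n) (hi : i ∈ J),
      z i = -(B.mulVec (subV qbar J)) ⟨i, hi⟩
            - (B.mulVec (subV u J)) ⟨i, hi⟩ := by
    intro i hi
    have hsum : ∑ j, D i j * u j = -(B.mulVec (subV u J)) ⟨i, hi⟩ := by
      rw [aux_sum_eq_subtype J (fun j => D i j * u j)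
        (fun j hj => by simp [hDdef, hj])]
      simp only [Matrix.mulVec, dotProduct, hDdef, subV]
      rw [← Finset.sum_neg_distrib]
      apply Finset.sum_congr rfl
      intro j _
      simp [hi, j.2]
    simp only [hzdef, Pi.add_apply, Matrix.mulVec, dotProduct] at *
    rw [hsum]
    simp [hrdef, hi]
    ring
  -- the value of M z on J rows: (M z)_i = -(q̄ + u)_i
  have hMz : ∀ (i : Fin n),
      (M.mulVec z) i = -∑ j : J, M i j.1 * ((B.mulVec (subV qbar J)) j
          + (B.mulVec (subV u J)) j) := by
    intro i
    have : (M.mulVec z) i = ∑ j : J, M i j.1 * z j.1 := by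
      simp only [Matrix.mulVec, dotProduct]
      exact aux_sum_eq_subtype J (fun j => M i j * z j)
        (fun j hj => by simp [hz_out j hj])
    rw [this, ← Finset.sum_neg_distrib]
    apply Finset.sum_congr rfl
    intro j _
    rw [hz_in j.1 j.2]
    ring_nf
  -- rows in J of M z + q + u vanish
  have hw_in : ∀ (i : Fin n) (hi : i ∈ J), (M.mulVec z + (qbar + u)) i = 0 := by
    intro i hi
    have key : ∑ j : J, M i j.1 * ((B.mulVec (subV qbar J)) j
        + (B.mulVec (subV u J)) j) = qbar i + u i := by
      have h1 : ∑ j : J, M i j.1 * ((B.mulVec (subV qbar J)) j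
          + (B.mulVec (subV u J)) j)
          = ((subM M J) * B).mulVec (subV qbar J + subV u J) ⟨i, hi⟩ := by
        rw [← Matrix.mulVec_mulVec, Matrix.mulVec_add]
        simp only [Matrix.mulVec, dotProduct, Pi.add_apply, subM,
          Matrix.of_apply]
      rw [h1, Matrix.mul_nonsing_inv _ hinv, Matrix.one_mulVec]
      simp [subV]
    simp only [Pi.add_apply, hMz i, key]
    ring
  -- nonnegativity of z
  have hz_nonneg : ∀ i, 0 ≤ z i := by
    intro i
    by_cases hi : i ∈ J
    · rw [hz_in i hi]
      have hb : (B.mulVec (subV u J)) ⟨i, hi⟩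
          ≤ ∑ j : J, |B ⟨i, hi⟩ j * ubar j.1| := by
        apply aux_sum_abs_bound
        intro j
        exact abs_le.mpr ⟨(hu j.1).1, (hu j.1).2⟩
      have hAi := hA ⟨i, hi⟩
      rw [Finset.sum_neg_distrib] at hAi
      linarith
    · rw [hz_out i hi]
  -- nonnegativity of w = M z + q̄ + u
  have hw_nonneg : ∀ i, 0 ≤ (M.mulVec z + (qbar + u)) i := by
    intro i
    by_cases hi : i ∈ J
    · exact le_of_eq (hw_in i hi).symm
    · have hCi := hC i hi
      rw [Finset.sum_neg_distrib] at hCi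
      have hswap : ∑ j : J, M i j.1 * (B.mulVec (subV u J)) j
          = ∑ j : J, (∑ l : J, M i l.1 * B l j) * u j.1 := by
        simp only [Matrix.mulVec, dotProduct, Finset.mul_sum, Finset.sum_mul]
        rw [Finset.sum_comm]
        apply Finset.sum_congr rfl
        intro j _
        apply Finset.sum_congr rfl
        intro l _
        simp [subV]
        ring
      have hb : ∑ j : J, (∑ l : J, M i l.1 * B l j) * u j.1
          ≤ ∑ j : J, |(∑ l : J, M i l.1 * B l j) * ubar j.1| := by
        apply aux_sum_abs_bound
        intro j
        exact abs_le.mpr ⟨(hu j.1).1, (hu j.1).2⟩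
      have hui := (hu i).1
      have hexp : (M.mulVec z + (qbar + u)) i
          = -(∑ j : J, M i j.1 * (B.mulVec (subV qbar J)) j)
            - (∑ j : J, M i j.1 * (B.mulVec (subV u J)) j) + qbar i + u i := by
        simp only [Pi.add_apply, hMz i]
        have hsplit : ∑ j : J, M i j.1 * ((B.mulVec (subV qbar J)) j
            + (B.mulVec (subV u J)) j)
            = (∑ j : J, M i j.1 * (B.mulVec (subV qbar J)) j)
              + ∑ j : J, M i j.1 * (B.mulVec (subV u J)) j := by
          rw [← Finset.sum_add_distrib]
          exact Finset.sum_congr rfl (fun j _ => by ring)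
        rw [hsplit]
        ring
      rw [hexp, hswap]
      linarith
  refine ⟨hz_nonneg, hw_nonneg, ?_⟩
  apply Finset.sum_eq_zero
  intro i _
  by_cases hi : i ∈ J
  · rw [hw_in i hi, mul_zero]
  · rw [hz_out i hi, zero_mul]
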